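/- Let d, s ≥ 0 and N ≥ 1 be integers. Then Σ_{n=0}^{d} Σ_{k=0}^{d} (-1)^{k-n} · binom(-s, k) · binom(k, n) · binom(d + (s+n)/N, d) = 1, where binom(α, d) for rational α is the generalized binomial coefficient α(α-1)⋯(α-d+1)/d!. -/

import Mathlib

open Finset Polynomial

/-- The generalized binomial coefficient `α(α-1)⋯(α-d+1)/d!` for rational `α`. -/
noncomputable def genChoose (α : ℚ) (d : ℕ) : ℚ :=
  (∏ i ∈ Finset.range d, (α - i)) / d.factorial

lemma prod_eq_descPochhammer (x : ℚ) (k : ℕ) :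
    ∏ i ∈ range k, (x - i) = (descPochhammer ℚ k).eval x := by
  induction k with
  | zero => simp
  | succ k ih => rw [prod_range_succ, ih, descPochhammer_succ_right]; simp

lemma genChoose_natCast (m k : ℕ) : genChoose (m : ℚ) k = m.choose k := by
  unfold genChoose
  rw [prod_eq_descPochhammer, descPochhammer_eval_eq_descFactorial,
    Nat.descFactorial_eq_factorial_mul_choose, Nat.cast_mul,
    mul_comm, mul_div_assoc, div_self (by exact_mod_cast k.factorial_ne_zero), mul_one]

lemma alt_sum_q (n : ℕ) :
    ∑ m ∈ range (n + 1), ((-1 : ℚ)) ^ m * n.choose m = if n = 0 then 1 else 0 := by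
  have h := Int.alternating_sum_range_choose (n := n)
  have := congrArg (fun z : ℤ => (z : ℚ)) h
  push_cast at this
  simpa using this

lemma delta_lemma (d m n : ℕ) (hm : m ≤ d) :
    ∑ k ∈ range (d + 1), (-1 : ℚ) ^ (k + n) * (m.choose k) * (k.choose n)
      = if n = m then 1 else 0 := by
  have hsub : Icc n m ⊆ range (d + 1) := fun k hk => by
    rw [mem_Icc] at hk; rw [mem_range]; omega
  rw [← Finset.sum_subset hsub]
  · rcases le_or_gt n m with hnm | hnm
    · rw [← Finset.Ico_add_one_right_eq_Icc, Finset.sum_Ico_eq_sum_range]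
      have hrange : m + 1 - n = m - n + 1 := by omega
      rw [hrange]
      have : ∀ j ∈ range (m - n + 1),
          (-1 : ℚ) ^ (n + j + n) * (m.choose (n + j)) * ((n + j).choose n)
            = (m.choose n : ℚ) * ((-1 : ℚ) ^ j * ((m - n).choose j)) := by
        intro j hj
        rw [mem_range] at hj
        have h1 : m.choose (n + j) * (n + j).choose n = m.choose n * (m - n).choose j := by
          have := Nat.choose_mul (n := m) (k := n + j) (s := n) (by omega)
          simpa using this
        have h2 : (-1 : ℚ) ^ (n + j + n) = (-1 : ℚ) ^ j := by
          rw [show n + j + n = j + 2 * n by ring, pow_add, pow_mul]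
          norm_num
        have h1q : (m.choose (n + j) : ℚ) * ((n + j).choose n)
            = (m.choose n : ℚ) * ((m - n).choose j) := by exact_mod_cast congrArg (Nat.cast : ℕ → ℚ) h1
        rw [h2]
        calc (-1:ℚ) ^ j * (m.choose (n+j)) * ((n+j).choose n)
            = (-1:ℚ) ^ j * ((m.choose (n+j) : ℚ) * ((n+j).choose n)) := by ring
          _ = (-1:ℚ) ^ j * ((m.choose n : ℚ) * ((m - n).choose j)) := by rw [h1q]
          _ = (m.choose n : ℚ) * ((-1 : ℚ) ^ j * ((m - n).choose j)) := by ring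
      rw [Finset.sum_congr rfl this, ← Finset.mul_sum, alt_sum_q]
      rcases eq_or_ne n m with rfl | hne
      · simp
      · have : m - n ≠ 0 := by omega
        simp [this, hne, Ne.symm hne]
    · rw [Finset.Icc_eq_empty (by omega), Finset.sum_empty]
      have : n ≠ m := by omega
      simp [this]
  · intro k hk hknot
    rw [mem_Icc] at hknot
    rcases Nat.lt_or_ge k n with h | h
    · rw [Nat.choose_eq_zero_of_lt h]; simp
    · have : m < k := by omega
      rw [Nat.choose_eq_zero_of_lt this]; simp

lemma sign_eq (k n : ℕ) : (-1 : ℚ) ^ ((k : ℤ) - (n : ℤ)) = (-1 : ℚ) ^ (k + n) := by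
  rw [zpow_sub₀ (by norm_num : (-1 : ℚ) ≠ 0), zpow_natCast, zpow_natCast, pow_add,
    div_eq_mul_inv]
  congr 1
  rcases Nat.even_or_odd n with h | h
  · rw [h.neg_one_pow]; norm_num
  · rw [h.neg_one_pow]; norm_num

theorem stmt7 (d s N : ℕ) (hN : 1 ≤ N) :
    ∑ n ∈ Finset.range (d + 1), ∑ k ∈ Finset.range (d + 1),
        (-1 : ℚ) ^ ((k : ℤ) - (n : ℤ)) * genChoose (-(s : ℚ)) k * (k.choose n : ℚ) *
          genChoose ((d : ℚ) + ((s : ℚ) + n) / N) d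
      = 1 := by
  classical
  set g : ℕ → ℚ := fun n => genChoose ((d : ℚ) + ((s : ℚ) + n) / N) d with hg
  set pk : ℕ → ℚ[X] := fun k => C ((k.factorial : ℚ)⁻¹) * ∏ i ∈ range k, (X - C (i : ℚ))
    with hpk
  have hpk_eval : ∀ (x : ℚ) (k : ℕ), (pk k).eval x = genChoose x k := by
    intro x k
    simp only [hpk, eval_mul, eval_C, eval_prod, eval_sub, eval_X, eval_natCast]
    rw [genChoose, div_eq_inv_mul]
  set P : ℚ[X] := C ((d.factorial : ℚ)⁻¹) *
      ∏ i ∈ range d, (C ((d : ℚ) - i) + (C (s : ℚ) + X) * C ((N : ℚ)⁻¹)) with hP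
  have hP_eval : ∀ x : ℚ, P.eval x = genChoose ((d : ℚ) + ((s : ℚ) + x) / N) d := by
    intro x
    simp only [hP, eval_mul, eval_C, eval_prod, eval_add, eval_X]
    rw [genChoose, div_eq_inv_mul]
    congr 1
    refine Finset.prod_congr rfl fun i _ => ?_
    rw [div_eq_mul_inv]
    ring
  set A : ℚ[X] := ∑ n ∈ range (d + 1), ∑ k ∈ range (d + 1),
      C ((-1 : ℚ) ^ (k + n) * (k.choose n) * g n) * pk k with hA
  have hA_eval_nat : ∀ m : ℕ, m ≤ d → A.eval (m : ℚ) = g m := by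
    intro m hm
    have step1 : A.eval (m : ℚ) = ∑ n ∈ range (d + 1), g n *
        ∑ k ∈ range (d + 1), (-1 : ℚ) ^ (k + n) * (m.choose k) * (k.choose n) := by
      simp only [hA, eval_finset_sum, eval_mul, eval_C]
      refine Finset.sum_congr rfl fun n _ => ?_
      rw [Finset.mul_sum]
      refine Finset.sum_congr rfl fun k _ => ?_
      rw [hpk_eval, genChoose_natCast]
      ring
    rw [step1, Finset.sum_congr rfl (fun n _ => by rw [delta_lemma d m n hm])]
    simp only [mul_ite, mul_one, mul_zero]
    rw [Finset.sum_ite_eq' (range (d + 1)) m g]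
    simp [Nat.lt_succ_of_le hm]
  -- degree bounds
  have hpk_deg : ∀ k : ℕ, (pk k).degree ≤ (k : WithBot ℕ) := by
    intro k
    refine (degree_mul_le _ _).trans ?_
    have h1 : (∏ i ∈ range k, (X - C (i : ℚ))).degree ≤ (k : WithBot ℕ) := by
      refine (degree_prod_le _ _).trans ?_
      have : ∀ i ∈ range k, (X - C (i : ℚ)).degree ≤ 1 :=
        fun i _ => (degree_X_sub_C _).le
      refine le_trans (Finset.sum_le_sum
        (f := fun i : ℕ => (X - C (i : ℚ)).degree) (g := fun _ => 1) this) ?_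
      rw [Finset.sum_const, card_range]
      simp [Nat.smul_one_eq_cast]
    calc (C ((k.factorial : ℚ)⁻¹)).degree + (∏ i ∈ range k, (X - C (i : ℚ))).degree
        ≤ 0 + (k : WithBot ℕ) := add_le_add degree_C_le h1
      _ = (k : WithBot ℕ) := by rw [zero_add]
  have hA_deg : A.degree < ((d + 1 : ℕ) : WithBot ℕ) := by
    refine (degree_sum_le _ _).trans_lt ?_
    rw [Finset.sup_lt_iff (by exact_mod_cast WithBot.bot_lt_coe (d + 1))]
    intro n _
    refine (degree_sum_le _ _).trans_lt ?_
    rw [Finset.sup_lt_iff (by exact_mod_cast WithBot.bot_lt_coe (d + 1))]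
    intro k hk
    rw [mem_range] at hk
    refine (degree_mul_le _ _).trans_lt ?_
    calc (C ((-1 : ℚ) ^ (k + n) * (k.choose n) * g n)).degree + (pk k).degree
        ≤ 0 + (k : WithBot ℕ) := add_le_add degree_C_le (hpk_deg k)
      _ = (k : WithBot ℕ) := zero_add _
      _ < ((d + 1 : ℕ) : WithBot ℕ) := by exact_mod_cast hk
  have hP_deg : P.degree < ((d + 1 : ℕ) : WithBot ℕ) := by
    have h1 : (∏ i ∈ range d, (C ((d : ℚ) - i) + (C (s : ℚ) + X) * C ((N : ℚ)⁻¹))).degree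
        ≤ (d : WithBot ℕ) := by
      have h2 : ∀ i ∈ range d,
          (C ((d : ℚ) - i) + (C (s : ℚ) + X) * C ((N : ℚ)⁻¹)).degree ≤ 1 := by
        intro i _
        have heq : C ((d : ℚ) - i) + (C (s : ℚ) + X) * C ((N : ℚ)⁻¹)
            = C ((N : ℚ)⁻¹) * X + C ((d : ℚ) - i + s * (N : ℚ)⁻¹) := by
          rw [map_add, map_mul]; ring
        rw [heq]
        exact (degree_linear_le)
      refine (degree_prod_le _ _).trans (le_trans (Finset.sum_le_sum
        (f := fun i : ℕ => (C ((d : ℚ) - i) + (C (s : ℚ) + X) * C ((N : ℚ)⁻¹)).degree)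
        (g := fun _ => 1) h2) ?_)
      rw [Finset.sum_const, card_range]
      simp [Nat.smul_one_eq_cast]
    refine (degree_mul_le _ _).trans_lt
      (lt_of_le_of_lt (add_le_add degree_C_le h1) ?_)
    rw [zero_add]
    exact_mod_cast Nat.lt_succ_self d
  -- A = P via interpolation
  have hcard : #((range (d + 1)).image (Nat.cast : ℕ → ℚ)) = d + 1 := by
    rw [Finset.card_image_of_injective _ Nat.cast_injective, card_range]
  have hAP : A = P := by
    refine Polynomial.eq_of_degrees_lt_of_eval_finset_eq
      ((range (d + 1)).image (Nat.cast : ℕ → ℚ)) ?_ ?_ ?_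
    · rw [hcard]; exact hA_deg
    · rw [hcard]; exact hP_deg
    · intro x hx
      obtain ⟨m, hm, rfl⟩ := Finset.mem_image.mp hx
      rw [mem_range] at hm
      rw [hA_eval_nat m (by omega), hP_eval]
  -- conclude
  have hfinal : A.eval (-(s : ℚ)) =
      ∑ n ∈ Finset.range (d + 1), ∑ k ∈ Finset.range (d + 1),
        (-1 : ℚ) ^ ((k : ℤ) - (n : ℤ)) * genChoose (-(s : ℚ)) k * (k.choose n : ℚ) *
          genChoose ((d : ℚ) + ((s : ℚ) + n) / N) d := by
    simp only [hA, eval_finset_sum, eval_mul, eval_C]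
    refine Finset.sum_congr rfl fun n _ => Finset.sum_congr rfl fun k _ => ?_
    rw [hpk_eval, sign_eq]
    ring
  rw [← hfinal, hAP, hP_eval]
  have : (s : ℚ) + -(s : ℚ) = 0 := by ring
  rw [this, zero_div, add_zero]
  rw [show ((d : ℚ)) = ((d : ℕ) : ℚ) from rfl, genChoose_natCast, Nat.choose_self, Nat.cast_one]
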